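/- arXiv:2007.11303 — 6 statements merged into one kernel-verified Lean document; each statement's English description precedes it below -/
import Mathlib

section
/- Let V : ℝ → ℝ be defined by V(x) = (∫_{θ=0}^{2π} cos θ · exp(x · cos θ) dθ) / (∫_{θ=0}^{2π} exp(x · cos θ) dθ). Then V(0) = 0, V(−x) = −V(x) for all x ∈ ℝ, and for every x > 0 one has 0 < V(x) < x/2. -/
open Real MeasureTheory

/-- The function `V(x) = (∫ cos θ e^{x cos θ} dθ) / (∫ e^{x cos θ} dθ)` over `[0, 2π]`. -/
noncomputable def V (x : ℝ) : ℝ :=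
  (∫ θ in (0:ℝ)..(2 * π), Real.cos θ * Real.exp (x * Real.cos θ)) /
  (∫ θ in (0:ℝ)..(2 * π), Real.exp (x * Real.cos θ))

private lemma expDeriv (x t : ℝ) :
    HasDerivAt (fun θ => Real.exp (x * Real.cos θ))
      (Real.exp (x * Real.cos t) * (x * -Real.sin t)) t :=
  ((Real.hasDerivAt_cos t).const_mul x).exp

/-- Integration by parts: `∫ cos θ e^{x cos θ} = x ∫ sin² θ e^{x cos θ}`. -/
private lemma intN (x : ℝ) :
    (∫ θ in (0:ℝ)..(2 * π), Real.cos θ * Real.exp (x * Real.cos θ)) =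
      x * ∫ θ in (0:ℝ)..(2 * π), Real.sin θ ^ 2 * Real.exp (x * Real.cos θ) := by
  have hi1 : IntervalIntegrable (fun θ => Real.cos θ * Real.exp (x * Real.cos θ))
      volume 0 (2 * π) := (by fun_prop : Continuous _).intervalIntegrable _ _
  have hi2 : IntervalIntegrable (fun θ => Real.sin θ ^ 2 * Real.exp (x * Real.cos θ))
      volume 0 (2 * π) := (by fun_prop : Continuous _).intervalIntegrable _ _
  have key : (∫ θ in (0:ℝ)..(2 * π),
      (Real.cos θ * Real.exp (x * Real.cos θ) -
        x * (Real.sin θ ^ 2 * Real.exp (x * Real.cos θ)))) = 0 := by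
    rw [intervalIntegral.integral_eq_sub_of_hasDerivAt
      (f := fun θ => Real.sin θ * Real.exp (x * Real.cos θ))
      (fun t _ => by
        have := (Real.hasDerivAt_sin t).fun_mul (expDeriv x t)
        exact this.congr_deriv (by ring))
      (hi1.sub (hi2.const_mul x))]
    simp
  rw [intervalIntegral.integral_sub hi1 (hi2.const_mul x),
    intervalIntegral.integral_const_mul] at key
  linarith

/-- Integration by parts: `∫ (cos²−sin²) e^{x cos θ} = x ∫ sin² cos θ e^{x cos θ}`. -/
private lemma intB (x : ℝ) :
    (∫ θ in (0:ℝ)..(2 * π), (Real.cos θ ^ 2 - Real.sin θ ^ 2) * Real.exp (x * Real.cos θ)) =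
      x * ∫ θ in (0:ℝ)..(2 * π), Real.sin θ ^ 2 * Real.cos θ * Real.exp (x * Real.cos θ) := by
  have hi1 : IntervalIntegrable
      (fun θ => (Real.cos θ ^ 2 - Real.sin θ ^ 2) * Real.exp (x * Real.cos θ))
      volume 0 (2 * π) := (by fun_prop : Continuous _).intervalIntegrable _ _
  have hi2 : IntervalIntegrable
      (fun θ => Real.sin θ ^ 2 * Real.cos θ * Real.exp (x * Real.cos θ))
      volume 0 (2 * π) := (by fun_prop : Continuous _).intervalIntegrable _ _
  have key : (∫ θ in (0:ℝ)..(2 * π),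
      ((Real.cos θ ^ 2 - Real.sin θ ^ 2) * Real.exp (x * Real.cos θ) -
        x * (Real.sin θ ^ 2 * Real.cos θ * Real.exp (x * Real.cos θ)))) = 0 := by
    rw [intervalIntegral.integral_eq_sub_of_hasDerivAt
      (f := fun θ => Real.sin θ * Real.cos θ * Real.exp (x * Real.cos θ))
      (fun t _ => by
        have := ((Real.hasDerivAt_sin t).fun_mul (Real.hasDerivAt_cos t)).fun_mul (expDeriv x t)
        exact this.congr_deriv (by ring))
      (hi1.sub (hi2.const_mul x))]
    simp
  rw [intervalIntegral.integral_sub hi1 (hi2.const_mul x),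
    intervalIntegral.integral_const_mul] at key
  linarith

private lemma D_pos (x : ℝ) : 0 < ∫ θ in (0:ℝ)..(2 * π), Real.exp (x * Real.cos θ) :=
  intervalIntegral.intervalIntegral_pos_of_pos_on
    ((by fun_prop : Continuous _).intervalIntegrable _ _)
    (fun _ _ => Real.exp_pos _) (by positivity)

private lemma A_pos (x : ℝ) :
    0 < ∫ θ in (0:ℝ)..(2 * π), Real.sin θ ^ 2 * Real.exp (x * Real.cos θ) := by
  have hc : Continuous (fun θ => Real.sin θ ^ 2 * Real.exp (x * Real.cos θ)) := by fun_prop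
  rw [← intervalIntegral.integral_add_adjacent_intervals (b := π)
    (hc.intervalIntegrable _ _) (hc.intervalIntegrable _ _)]
  have h1 : 0 < ∫ θ in (0:ℝ)..π, Real.sin θ ^ 2 * Real.exp (x * Real.cos θ) :=
    intervalIntegral.intervalIntegral_pos_of_pos_on (hc.intervalIntegrable _ _)
      (fun t ht => mul_pos (pow_pos (Real.sin_pos_of_pos_of_lt_pi ht.1 ht.2) 2)
        (Real.exp_pos _)) Real.pi_pos
  have h2 : 0 ≤ ∫ θ in (π:ℝ)..(2 * π), Real.sin θ ^ 2 * Real.exp (x * Real.cos θ) :=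
    intervalIntegral.integral_nonneg (by linarith [Real.pi_pos])
      (fun t _ => mul_nonneg (sq_nonneg _) (Real.exp_pos _).le)
  linarith

private lemma B_pos {x : ℝ} (hx : 0 < x) :
    0 < ∫ θ in (0:ℝ)..(2 * π), Real.sin θ ^ 2 * Real.cos θ * Real.exp (x * Real.cos θ) := by
  have hc : Continuous (fun θ => Real.sin θ ^ 2 * Real.cos θ * Real.exp (x * Real.cos θ)) := by
    fun_prop
  rw [← intervalIntegral.integral_add_adjacent_intervals (b := π)
    (hc.intervalIntegrable _ _) (hc.intervalIntegrable _ _)]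
  have shift : (∫ θ in (π:ℝ)..(2 * π),
      Real.sin θ ^ 2 * Real.cos θ * Real.exp (x * Real.cos θ)) =
      ∫ θ in (0:ℝ)..π, -(Real.sin θ ^ 2 * Real.cos θ * Real.exp (-(x * Real.cos θ))) := by
    have hcomp := intervalIntegral.integral_comp_add_right (a := 0) (b := π)
      (fun θ => Real.sin θ ^ 2 * Real.cos θ * Real.exp (x * Real.cos θ)) π
    rw [show (0 + π : ℝ) = π by ring, show (π + π : ℝ) = 2 * π by ring] at hcomp
    rw [← hcomp]
    refine intervalIntegral.integral_congr fun t _ => ?_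
    simp only [Real.sin_add_pi, Real.cos_add_pi]
    ring_nf
  rw [shift, ← intervalIntegral.integral_add (hc.intervalIntegrable _ _)
    (((by fun_prop : Continuous (fun θ : ℝ =>
      -(Real.sin θ ^ 2 * Real.cos θ * Real.exp (-(x * Real.cos θ)))))).intervalIntegrable _ _)]
  set h : ℝ → ℝ := fun θ => Real.sin θ ^ 2 * Real.cos θ *
      (Real.exp (x * Real.cos θ) - Real.exp (-(x * Real.cos θ))) with hh
  have hcongr : ∀ t : ℝ, Real.sin t ^ 2 * Real.cos t * Real.exp (x * Real.cos t) +
      -(Real.sin t ^ 2 * Real.cos t * Real.exp (-(x * Real.cos t))) = h t := by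
    intro t; simp [hh]; ring
  have hch : Continuous h := by fun_prop
  rw [intervalIntegral.integral_congr (fun t _ => hcongr t)]
  rw [← intervalIntegral.integral_add_adjacent_intervals (b := π / 2)
    (hch.intervalIntegrable _ _) (hch.intervalIntegrable _ _)]
  have h1 : 0 < ∫ θ in (0:ℝ)..(π / 2), h θ := by
    refine intervalIntegral.intervalIntegral_pos_of_pos_on (hch.intervalIntegrable _ _)
      (fun t ht => ?_) (by positivity)
    have hs : 0 < Real.sin t := Real.sin_pos_of_pos_of_lt_pi ht.1
      (lt_trans ht.2 (by linarith [Real.pi_pos]))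
    have hcos : 0 < Real.cos t := Real.cos_pos_of_mem_Ioo
      ⟨by linarith [Real.pi_pos, ht.1], ht.2⟩
    have he : Real.exp (-(x * Real.cos t)) < Real.exp (x * Real.cos t) :=
      Real.exp_lt_exp.2 (by nlinarith)
    exact mul_pos (mul_pos (pow_pos hs 2) hcos) (by linarith)
  have h2 : 0 ≤ ∫ θ in (π / 2 : ℝ)..π, h θ := by
    refine intervalIntegral.integral_nonneg (by linarith [Real.pi_pos]) (fun t ht => ?_)
    have hcos : Real.cos t ≤ 0 :=
      Real.cos_nonpos_of_pi_div_two_le_of_le ht.1 (by linarith [Real.pi_pos, ht.2])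
    have he : Real.exp (x * Real.cos t) - Real.exp (-(x * Real.cos t)) ≤ 0 := by
      have : Real.exp (x * Real.cos t) ≤ Real.exp (-(x * Real.cos t)) :=
        Real.exp_le_exp.2 (by nlinarith)
      linarith
    have h3 := mul_nonneg (neg_nonneg.2 hcos) (neg_nonneg.2 he)
    have h4 := mul_nonneg (sq_nonneg (Real.sin t)) h3
    simp only [hh]
    nlinarith [h4]
  linarith

private lemma D_even (x : ℝ) :
    (∫ θ in (0:ℝ)..(2 * π), Real.exp ((-x) * Real.cos θ)) =
      ∫ θ in (0:ℝ)..(2 * π), Real.exp (x * Real.cos θ) := by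
  have per : Function.Periodic (fun t => Real.exp (x * Real.cos t)) (2 * π) := fun t => by
    simp [Real.cos_add_two_pi]
  calc (∫ θ in (0:ℝ)..(2 * π), Real.exp ((-x) * Real.cos θ))
      = ∫ θ in (0:ℝ)..(2 * π), Real.exp (x * Real.cos (θ + π)) := by
        refine intervalIntegral.integral_congr fun t _ => ?_
        rw [Real.cos_add_pi]; ring_nf
    _ = ∫ θ in (0 + π : ℝ)..(2 * π + π), Real.exp (x * Real.cos θ) :=
        intervalIntegral.integral_comp_add_right (fun θ => Real.exp (x * Real.cos θ)) π
    _ = ∫ θ in (0:ℝ)..(2 * π), Real.exp (x * Real.cos θ) := by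
        rw [show (0 + π : ℝ) = π by ring, show (2 * π + π : ℝ) = π + 2 * π by ring,
          per.intervalIntegral_add_eq π 0, zero_add]

private lemma N_odd (x : ℝ) :
    (∫ θ in (0:ℝ)..(2 * π), Real.cos θ * Real.exp ((-x) * Real.cos θ)) =
      -∫ θ in (0:ℝ)..(2 * π), Real.cos θ * Real.exp (x * Real.cos θ) := by
  have per : Function.Periodic (fun t => Real.cos t * Real.exp (x * Real.cos t)) (2 * π) :=
    fun t => by simp [Real.cos_add_two_pi]
  calc (∫ θ in (0:ℝ)..(2 * π), Real.cos θ * Real.exp ((-x) * Real.cos θ))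
      = ∫ θ in (0:ℝ)..(2 * π), -(Real.cos (θ + π) * Real.exp (x * Real.cos (θ + π))) := by
        refine intervalIntegral.integral_congr fun t _ => ?_
        rw [Real.cos_add_pi]; ring_nf
    _ = -∫ θ in (0:ℝ)..(2 * π), Real.cos (θ + π) * Real.exp (x * Real.cos (θ + π)) :=
        intervalIntegral.integral_neg
    _ = -∫ θ in (0 + π : ℝ)..(2 * π + π), Real.cos θ * Real.exp (x * Real.cos θ) := by
        rw [intervalIntegral.integral_comp_add_right
          (fun θ => Real.cos θ * Real.exp (x * Real.cos θ)) π]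
    _ = -∫ θ in (0:ℝ)..(2 * π), Real.cos θ * Real.exp (x * Real.cos θ) := by
        rw [show (0 + π : ℝ) = π by ring, show (2 * π + π : ℝ) = π + 2 * π by ring,
          per.intervalIntegral_add_eq π 0, zero_add]

theorem V_zero_odd_and_bounds :
    V 0 = 0 ∧ (∀ x : ℝ, V (-x) = -V x) ∧ ∀ x : ℝ, 0 < x → 0 < V x ∧ V x < x / 2 := by
  refine ⟨?_, ?_, ?_⟩
  · simp [V]
  · intro x
    simp only [V]
    rw [N_odd x, D_even x, neg_div]
  · intro x hx
    have hD := D_pos x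
    have hA := A_pos x
    have hB := B_pos hx
    have hVeq : V x = (x * ∫ θ in (0:ℝ)..(2 * π),
        Real.sin θ ^ 2 * Real.exp (x * Real.cos θ)) /
        (∫ θ in (0:ℝ)..(2 * π), Real.exp (x * Real.cos θ)) := by
      rw [V, intN]
    constructor
    · rw [hVeq]; exact div_pos (mul_pos hx hA) hD
    · -- need D - 2A = x * B > 0
      have hDA : (∫ θ in (0:ℝ)..(2 * π), Real.exp (x * Real.cos θ)) -
          2 * (∫ θ in (0:ℝ)..(2 * π), Real.sin θ ^ 2 * Real.exp (x * Real.cos θ)) =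
          x * ∫ θ in (0:ℝ)..(2 * π),
            Real.sin θ ^ 2 * Real.cos θ * Real.exp (x * Real.cos θ) := by
        have hi1 : IntervalIntegrable (fun θ => Real.exp (x * Real.cos θ))
            volume 0 (2 * π) := (by fun_prop : Continuous _).intervalIntegrable _ _
        have hi2 : IntervalIntegrable (fun θ => Real.sin θ ^ 2 * Real.exp (x * Real.cos θ))
            volume 0 (2 * π) := (by fun_prop : Continuous _).intervalIntegrable _ _
        rw [← intB]
        rw [show (fun θ => (Real.cos θ ^ 2 - Real.sin θ ^ 2) * Real.exp (x * Real.cos θ)) =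
          (fun θ => Real.exp (x * Real.cos θ) -
            2 * (Real.sin θ ^ 2 * Real.exp (x * Real.cos θ))) from funext fun t => by
            rw [Real.cos_sq']; ring]
        rw [intervalIntegral.integral_sub hi1 (hi2.const_mul 2),
          intervalIntegral.integral_const_mul]
      rw [hVeq, div_lt_div_iff₀ hD two_pos]
      nlinarith [mul_pos hx hB, mul_pos hx (mul_pos hx hB)]
end

section
/- Let V : ℝ → ℝ be defined by V(x) = (∫_{θ=0}^{2π} cos θ · exp(x · cos θ) dθ) / (∫_{θ=0}^{2π} exp(x · cos θ) dθ). Then V is differentiable on ℝ, its derivative at 0 equals 1/2, and V'(x) > 0 for every x ≠ 0; in particular V is strictly increasing on ℝ. -/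
open Real

namespace VAux

open intervalIntegral MeasureTheory Metric

noncomputable def D (x : ℝ) : ℝ := ∫ θ in (0:ℝ)..(2 * π), Real.exp (x * Real.cos θ)

noncomputable def N (x : ℝ) : ℝ := ∫ θ in (0:ℝ)..(2 * π), Real.cos θ * Real.exp (x * Real.cos θ)

noncomputable def M (x : ℝ) : ℝ :=
  ∫ θ in (0:ℝ)..(2 * π), (Real.cos θ) ^ 2 * Real.exp (x * Real.cos θ)

lemma contD (x : ℝ) : Continuous fun θ : ℝ => Real.exp (x * Real.cos θ) := by
  fun_prop

lemma contN (x : ℝ) : Continuous fun θ : ℝ => Real.cos θ * Real.exp (x * Real.cos θ) := by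
  fun_prop

lemma contM (x : ℝ) : Continuous fun θ : ℝ => (Real.cos θ) ^ 2 * Real.exp (x * Real.cos θ) := by
  fun_prop

lemma intD (x : ℝ) :
    IntervalIntegrable (fun θ => Real.exp (x * Real.cos θ)) volume 0 (2 * π) :=
  (contD x).intervalIntegrable _ _

lemma intN (x : ℝ) :
    IntervalIntegrable (fun θ => Real.cos θ * Real.exp (x * Real.cos θ)) volume 0 (2 * π) :=
  (contN x).intervalIntegrable _ _

lemma intM (x : ℝ) :
    IntervalIntegrable (fun θ => (Real.cos θ) ^ 2 * Real.exp (x * Real.cos θ)) volume 0 (2 * π) :=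
  (contM x).intervalIntegrable _ _

lemma abs_le_of_ball {x₀ x : ℝ} (hx : x ∈ ball x₀ 1) : |x| ≤ |x₀| + 1 := by
  have : |x - x₀| < 1 := by simpa [Real.dist_eq] using hx
  calc |x| = |x₀ + (x - x₀)| := by ring_nf
    _ ≤ |x₀| + |x - x₀| := abs_add_le _ _
    _ ≤ |x₀| + 1 := by linarith

lemma exp_bound {x₀ x t : ℝ} (hx : x ∈ ball x₀ 1) :
    Real.exp (x * Real.cos t) ≤ Real.exp (|x₀| + 1) := by
  apply Real.exp_le_exp.2
  calc x * Real.cos t ≤ |x * Real.cos t| := le_abs_self _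
    _ = |x| * |Real.cos t| := abs_mul _ _
    _ ≤ (|x₀| + 1) * 1 := by
        apply mul_le_mul (abs_le_of_ball hx) (Real.abs_cos_le_one t) (abs_nonneg _)
        positivity
    _ = |x₀| + 1 := mul_one _

lemma hasDerivAt_inner (c x : ℝ) :
    HasDerivAt (fun y : ℝ => Real.exp (y * c)) (c * Real.exp (x * c)) x := by
  have h := (hasDerivAt_mul_const c (x := x)).exp
  simpa [mul_comm] using h

lemma hasDerivAt_D (x : ℝ) : HasDerivAt D (N x) x := by
  have key := intervalIntegral.hasDerivAt_integral_of_dominated_loc_of_deriv_le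
    (F := fun y θ => Real.exp (y * Real.cos θ))
    (F' := fun y θ => Real.cos θ * Real.exp (y * Real.cos θ))
    (x₀ := x) (a := 0) (b := 2 * π) (μ := volume)
    (bound := fun _ => Real.exp (|x| + 1)) (ball_mem_nhds x one_pos)
    (Filter.Eventually.of_forall fun y => ((contD y).aestronglyMeasurable).restrict)
    (intD x) ((contN x).aestronglyMeasurable).restrict
    (Filter.Eventually.of_forall fun t _ y hy => by
      have h1 : |Real.cos t * Real.exp (y * Real.cos t)|
          = |Real.cos t| * Real.exp (y * Real.cos t) := by
        rw [abs_mul, abs_of_pos (Real.exp_pos _)]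
      calc ‖Real.cos t * Real.exp (y * Real.cos t)‖
          = |Real.cos t| * Real.exp (y * Real.cos t) := h1
        _ ≤ 1 * Real.exp (|x| + 1) :=
            mul_le_mul (Real.abs_cos_le_one t) (exp_bound hy) (Real.exp_pos _).le one_pos.le
        _ = Real.exp (|x| + 1) := one_mul _)
    (intervalIntegrable_const)
    (Filter.Eventually.of_forall fun t _ y _ => hasDerivAt_inner (Real.cos t) y)
  exact key.2

lemma hasDerivAt_N (x : ℝ) : HasDerivAt N (M x) x := by
  have key := intervalIntegral.hasDerivAt_integral_of_dominated_loc_of_deriv_le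
    (F := fun y θ => Real.cos θ * Real.exp (y * Real.cos θ))
    (F' := fun y θ => (Real.cos θ) ^ 2 * Real.exp (y * Real.cos θ))
    (x₀ := x) (a := 0) (b := 2 * π) (μ := volume)
    (bound := fun _ => Real.exp (|x| + 1)) (ball_mem_nhds x one_pos)
    (Filter.Eventually.of_forall fun y => ((contN y).aestronglyMeasurable).restrict)
    (intN x) ((contM x).aestronglyMeasurable).restrict
    (Filter.Eventually.of_forall fun t _ y hy => by
      have h1 : |(Real.cos t) ^ 2 * Real.exp (y * Real.cos t)|
          = (Real.cos t) ^ 2 * Real.exp (y * Real.cos t) := by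
        rw [abs_of_nonneg (by positivity)]
      have h2 : (Real.cos t) ^ 2 ≤ 1 := by
        rw [← one_pow 2]
        exact sq_le_sq' (by linarith [Real.neg_one_le_cos t]) (Real.cos_le_one t)
      calc ‖(Real.cos t) ^ 2 * Real.exp (y * Real.cos t)‖
          = (Real.cos t) ^ 2 * Real.exp (y * Real.cos t) := h1
        _ ≤ 1 * Real.exp (|x| + 1) :=
            mul_le_mul h2 (exp_bound hy) (Real.exp_pos _).le one_pos.le
        _ = Real.exp (|x| + 1) := one_mul _)
    (intervalIntegrable_const)
    (Filter.Eventually.of_forall fun t _ y _ => by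
      have := (hasDerivAt_inner (Real.cos t) y).const_mul (Real.cos t)
      simpa [pow_two, mul_assoc, mul_comm, mul_left_comm] using this)
  exact key.2

lemma D_pos (x : ℝ) : 0 < D x := by
  apply intervalIntegral_pos_of_pos (intD x) (fun t => Real.exp_pos _)
  positivity

/-- variance identity and positivity -/
lemma var_pos (x : ℝ) : 0 < M x * D x - N x ^ 2 := by
  set m : ℝ := N x / D x with hm
  have hD := D_pos x
  -- the variance integral
  have key : (∫ θ in (0:ℝ)..(2 * π), (Real.cos θ - m) ^ 2 * Real.exp (x * Real.cos θ))
      = M x - 2 * m * N x + m ^ 2 * D x := by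
    have : ∀ θ : ℝ, (Real.cos θ - m) ^ 2 * Real.exp (x * Real.cos θ)
        = (Real.cos θ) ^ 2 * Real.exp (x * Real.cos θ)
          - (2 * m) * (Real.cos θ * Real.exp (x * Real.cos θ))
          + m ^ 2 * Real.exp (x * Real.cos θ) := fun θ => by ring
    rw [intervalIntegral.integral_congr (fun θ _ => this θ)]
    rw [intervalIntegral.integral_add (((intM x).sub (((intN x)).const_mul _)))
      ((intD x).const_mul _), intervalIntegral.integral_sub (intM x) ((intN x).const_mul _),
      intervalIntegral.integral_const_mul, intervalIntegral.integral_const_mul]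
    rfl
  have hpos : 0 < ∫ θ in (0:ℝ)..(2 * π), (Real.cos θ - m) ^ 2 * Real.exp (x * Real.cos θ) := by
    apply intervalIntegral.integral_pos (by positivity)
    · exact Continuous.continuousOn (by fun_prop)
    · intro t _; positivity
    · by_cases hm1 : m = 1
      · refine ⟨π, ⟨Real.pi_pos.le, by linarith [Real.pi_pos]⟩, ?_⟩
        rw [Real.cos_pi, hm1]
        norm_num
        positivity
      · refine ⟨0, ⟨le_refl _, by positivity⟩, ?_⟩
        rw [Real.cos_zero]
        have h0 : (1:ℝ) - m ≠ 0 := sub_ne_zero.mpr fun h => hm1 h.symm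
        exact mul_pos (sq_pos_of_ne_zero h0) (Real.exp_pos _)
  have hvar : M x - 2 * m * N x + m ^ 2 * D x = (M x * D x - N x ^ 2) / D x := by
    field_simp [hm]
    rw [hm]
    field_simp
    ring
  have : 0 < (M x * D x - N x ^ 2) / D x := by rw [← hvar, ← key]; exact hpos
  exact (div_pos_iff.1 this).resolve_right (fun h => absurd hD (not_lt.2 h.2.le)) |>.1

lemma hasDerivAt_V (x : ℝ) :
    HasDerivAt V ((M x * D x - N x * N x) / D x ^ 2) x := by
  have h := (hasDerivAt_N x).div (hasDerivAt_D x) (D_pos x).ne'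
  exact h

lemma deriv_V (x : ℝ) : deriv V x = (M x * D x - N x * N x) / D x ^ 2 :=
  (hasDerivAt_V x).deriv

lemma deriv_V_pos (x : ℝ) : 0 < deriv V x := by
  rw [deriv_V]
  have := var_pos x
  have hD := D_pos x
  apply div_pos
  · nlinarith [var_pos x]
  · positivity

end VAux

theorem V_differentiable_deriv_pos :
    Differentiable ℝ V ∧ deriv V 0 = 1 / 2 ∧ (∀ x : ℝ, x ≠ 0 → 0 < deriv V x) ∧
      StrictMono V := by
  refine ⟨fun x => (VAux.hasDerivAt_V x).differentiableAt, ?_, fun x _ => VAux.deriv_V_pos x,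
    strictMono_of_deriv_pos VAux.deriv_V_pos⟩
  have hD : VAux.D 0 = 2 * π := by
    simp [VAux.D]
  have hN : VAux.N 0 = 0 := by
    simp [VAux.N]
  have hM : VAux.M 0 = π := by
    simp only [VAux.M, zero_mul, Real.exp_zero, mul_one]
    rw [integral_cos_sq]
    simp [Real.sin_two_pi, Real.cos_two_pi]
  rw [VAux.deriv_V, hD, hN, hM]
  have hπ := Real.pi_pos
  field_simp
  ring
end

section
/- Let V : ℝ → ℝ be defined by V(x) = (∫_{θ=0}^{2π} cos θ · exp(x · cos θ) dθ) / (∫_{θ=0}^{2π} exp(x · cos θ) dθ). Then for every x ≠ 0 the derivative of V satisfies V'(x) = −V(x)² − V(x)/x + 1, and the second derivative satisfies V''(x) = 2·V(x)³ + (3/x)·V(x)² + (2/x² − 2)·V(x) − 1/x. -/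
open Real MeasureTheory Metric

noncomputable def VA (x : ℝ) : ℝ := ∫ θ in (0:ℝ)..(2 * π), Real.exp (x * Real.cos θ)
noncomputable def VB (x : ℝ) : ℝ := ∫ θ in (0:ℝ)..(2 * π), Real.cos θ * Real.exp (x * Real.cos θ)
noncomputable def VC (x : ℝ) : ℝ :=
  ∫ θ in (0:ℝ)..(2 * π), (Real.cos θ) ^ 2 * Real.exp (x * Real.cos θ)

lemma V_eq (x : ℝ) : V x = VB x / VA x := rfl

lemma contA (x : ℝ) : Continuous fun θ : ℝ => Real.exp (x * Real.cos θ) :=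
  Real.continuous_exp.comp (continuous_const.mul Real.continuous_cos)

lemma contB (x : ℝ) : Continuous fun θ : ℝ => Real.cos θ * Real.exp (x * Real.cos θ) :=
  Real.continuous_cos.mul (contA x)

lemma contC (x : ℝ) : Continuous fun θ : ℝ => (Real.cos θ) ^ 2 * Real.exp (x * Real.cos θ) :=
  (Real.continuous_cos.pow 2).mul (contA x)

lemma contS (x : ℝ) : Continuous fun θ : ℝ => (Real.sin θ) ^ 2 * Real.exp (x * Real.cos θ) :=
  (Real.continuous_sin.pow 2).mul (contA x)

lemma exp_bound {x y θ : ℝ} (hy : y ∈ ball x 1) :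
    Real.exp (y * Real.cos θ) ≤ Real.exp (|x| + 1) := by
  apply Real.exp_le_exp.2
  have h1 : |y| < |x| + 1 := by
    have := mem_ball_iff_norm.1 hy
    have := abs_sub_abs_le_abs_sub y x
    simp [Real.norm_eq_abs] at *
    linarith
  calc y * Real.cos θ ≤ |y * Real.cos θ| := le_abs_self _
    _ = |y| * |Real.cos θ| := abs_mul _ _
    _ ≤ |y| * 1 := by nlinarith [abs_cos_le_one θ, abs_nonneg y]
    _ ≤ |x| + 1 := by linarith

lemma hasDerivAt_VA (x : ℝ) : HasDerivAt VA (VB x) x := by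
  have := (intervalIntegral.hasDerivAt_integral_of_dominated_loc_of_deriv_le
    (μ := volume) (a := 0) (b := 2 * π)
    (F := fun y θ => Real.exp (y * Real.cos θ))
    (F' := fun y θ => Real.cos θ * Real.exp (y * Real.cos θ))
    (bound := fun _ => Real.exp (|x| + 1)) (ball_mem_nhds x one_pos)
    (Filter.Eventually.of_forall fun y => ((contA y).aestronglyMeasurable))
    ((contA x).intervalIntegrable _ _)
    ((contB x).aestronglyMeasurable)
    (Filter.Eventually.of_forall fun θ _ y hy => by
      have h := exp_bound (θ := θ) hy
      have : |Real.cos θ| ≤ 1 := abs_cos_le_one θ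
      rw [Real.norm_eq_abs, abs_mul, Real.abs_exp]
      nlinarith [Real.exp_pos (y * Real.cos θ)])
    (intervalIntegrable_const)
    (Filter.Eventually.of_forall fun θ _ y _ => by
      simpa [mul_comm] using ((hasDerivAt_mul_const (Real.cos θ)).exp (x := y))))
  exact this.2

lemma hasDerivAt_VB (x : ℝ) : HasDerivAt VB (VC x) x := by
  have := (intervalIntegral.hasDerivAt_integral_of_dominated_loc_of_deriv_le
    (μ := volume) (a := 0) (b := 2 * π)
    (F := fun y θ => Real.cos θ * Real.exp (y * Real.cos θ))
    (F' := fun y θ => (Real.cos θ) ^ 2 * Real.exp (y * Real.cos θ))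
    (bound := fun _ => Real.exp (|x| + 1)) (ball_mem_nhds x one_pos)
    (Filter.Eventually.of_forall fun y => ((contB y).aestronglyMeasurable))
    ((contB x).intervalIntegrable _ _)
    ((contC x).aestronglyMeasurable)
    (Filter.Eventually.of_forall fun θ _ y hy => by
      have h := exp_bound (θ := θ) hy
      have : |Real.cos θ| ≤ 1 := abs_cos_le_one θ
      rw [Real.norm_eq_abs, abs_mul, Real.abs_exp]
      have hc2 : |Real.cos θ ^ 2| ≤ 1 := by
        rw [abs_pow]
        exact pow_le_one₀ (abs_nonneg _) (abs_cos_le_one θ)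
      nlinarith [Real.exp_pos (y * Real.cos θ)])
    (intervalIntegrable_const)
    (Filter.Eventually.of_forall fun θ _ y _ => by
      have h := ((hasDerivAt_mul_const (Real.cos θ)).exp (x := y)).const_mul (Real.cos θ)
      refine h.congr_deriv ?_
      ring))
  exact this.2

lemma VA_pos (x : ℝ) : 0 < VA x := by
  apply intervalIntegral.intervalIntegral_pos_of_pos ((contA x).intervalIntegrable _ _)
    (fun θ => Real.exp_pos _)
  positivity

lemma VB_eq (x : ℝ) :
    VB x = x * ∫ θ in (0:ℝ)..(2 * π), (Real.sin θ) ^ 2 * Real.exp (x * Real.cos θ) := by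
  have key : ∀ θ ∈ Set.uIcc (0:ℝ) (2 * π),
      HasDerivAt (fun t => Real.sin t * Real.exp (x * Real.cos t))
        (Real.cos θ * Real.exp (x * Real.cos θ) -
          x * ((Real.sin θ) ^ 2 * Real.exp (x * Real.cos θ))) θ := by
    intro θ _
    have h1 : HasDerivAt (fun t : ℝ => Real.exp (x * Real.cos t))
        (Real.exp (x * Real.cos θ) * (x * (-Real.sin θ))) θ :=
      ((Real.hasDerivAt_cos θ).const_mul x).exp
    have h2 := (Real.hasDerivAt_sin θ).mul h1
    refine h2.congr_deriv ?_
    ring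
  have h0 := intervalIntegral.integral_eq_sub_of_hasDerivAt key
    (((contB x).sub (continuous_const.mul (contS x))).intervalIntegrable _ _)
  simp [Real.sin_two_pi] at h0
  rw [intervalIntegral.integral_sub ((contB x).intervalIntegrable _ _)
    (((contS x).intervalIntegrable _ _).const_mul x)] at h0
  rw [intervalIntegral.integral_const_mul] at h0
  have : VB x - x * ∫ θ in (0:ℝ)..(2 * π), (Real.sin θ) ^ 2 * Real.exp (x * Real.cos θ) = 0 := h0
  linarith

lemma VC_eq (x : ℝ) (hx : x ≠ 0) : VC x = VA x - VB x / x := by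
  have h1 : VC x = VA x - ∫ θ in (0:ℝ)..(2 * π), (Real.sin θ) ^ 2 * Real.exp (x * Real.cos θ) := by
    rw [eq_sub_iff_add_eq, VC, VA,
      ← intervalIntegral.integral_add ((contC x).intervalIntegrable _ _)
        ((contS x).intervalIntegrable _ _)]
    congr 1
    ext θ
    have := Real.sin_sq_add_cos_sq θ
    nlinarith [Real.exp_pos (x * Real.cos θ)]
  rw [h1, VB_eq x]
  field_simp

lemma hasDerivAt_V (x : ℝ) (hx : x ≠ 0) :
    HasDerivAt V (-(V x) ^ 2 - V x / x + 1) x := by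
  have hA0 := (VA_pos x).ne'
  have h : HasDerivAt V ((VC x * VA x - VB x * VB x) / (VA x) ^ 2) x :=
    (hasDerivAt_VB x).div (hasDerivAt_VA x) hA0
  convert h using 1
  rw [VC_eq x hx, V_eq]
  field_simp
  ring

theorem V_deriv_formulas (x : ℝ) (hx : x ≠ 0) :
    deriv V x = -(V x) ^ 2 - V x / x + 1 ∧
      deriv (deriv V) x =
        2 * (V x) ^ 3 + (3 / x) * (V x) ^ 2 + (2 / x ^ 2 - 2) * V x - 1 / x := by
  refine ⟨(hasDerivAt_V x hx).deriv, ?_⟩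
  have hev : deriv V =ᶠ[nhds x] fun y => -(V y) ^ 2 - V y / y + 1 := by
    filter_upwards [isOpen_compl_singleton.mem_nhds (by simpa using hx)] with y hy
    exact (hasDerivAt_V y (by simpa using hy)).deriv
  rw [hev.deriv_eq]
  have hV := hasDerivAt_V x hx
  set v := -(V x) ^ 2 - V x / x + 1 with hv
  have hg : HasDerivAt (fun y => -(V y) ^ 2 - V y / y + 1)
      (-((2:ℕ) * V x ^ (2 - 1) * v) - (v * x - V x * 1) / x ^ 2) x := by
    simpa using (((hV.pow 2).neg).sub (hV.div (hasDerivAt_id x) hx)).add_const 1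
  rw [hg.deriv, hv]
  push_cast
  field_simp
  ring
end

section
/- Let K₁ ∈ ℝ, L₁ ∈ ℝ \ {0}, r₁, r₂ ≥ 0, and ψ₁, ψ₂ ∈ ℝ; set ψ = ψ₂ − ψ₁ and x = √(K₁²·r₁² + L₁²·r₂² + 2·K₁·L₁·r₁·r₂·cos ψ), and assume x ≠ 0. Then (∫_{θ=0}^{2π} cos(ψ₁ − θ) · exp(L₁·r₂·cos(ψ₂ − θ) + K₁·r₁·cos(ψ₁ − θ)) dθ) / (∫_{φ=0}^{2π} exp(L₁·r₂·cos(ψ₂ − φ) + K₁·r₁·cos(ψ₁ − φ)) dφ) = ((K₁·r₁ + L₁·r₂·cos ψ)/2) · W(x), and (∫_{θ=0}^{2π} sin(ψ₁ − θ) · exp(L₁·r₂·cos(ψ₂ − θ) + K₁·r₁·cos(ψ₁ − θ)) dθ) / (∫_{φ=0}^{2π} exp(L₁·r₂·cos(ψ₂ − φ) + K₁·r₁·cos(ψ₁ − φ)) dφ) = −(L₁·r₂·sin ψ / 2) · W(x). -/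
open Real

/-- The function `W(x) = 2 V(x) / x`. -/
noncomputable def W (x : ℝ) : ℝ := 2 * V x / x

theorem exists_polar (c s x : ℝ) (hx : 0 < x) (h : x ^ 2 = c ^ 2 + s ^ 2) :
    ∃ δ, x * Real.cos δ = c ∧ x * Real.sin δ = s := by
  set z : ℂ := ⟨c, s⟩ with hz
  have habs : ‖z‖ = x := by
    rw [Complex.norm_def, Complex.normSq_mk]
    rw [show c * c + s * s = x ^ 2 by rw [h]; ring]
    exact Real.sqrt_sq hx.le
  have hz0 : z ≠ 0 := by
    intro h0
    rw [h0] at habs; simp at habs; exact hx.ne' habs.symm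
  refine ⟨z.arg, ?_, ?_⟩
  · rw [Complex.cos_arg hz0, habs]; field_simp; rfl
  · rw [Complex.sin_arg, habs]; field_simp; rfl

theorem sin_exp_int (x : ℝ) (hx : x ≠ 0) :
    ∫ θ in (0:ℝ)..(2 * π), Real.sin θ * Real.exp (x * Real.cos θ) = 0 := by
  have hd : ∀ θ : ℝ, HasDerivAt (fun θ => -Real.exp (x * Real.cos θ) / x)
      (Real.sin θ * Real.exp (x * Real.cos θ)) θ := by
    intro θ
    have h1 : HasDerivAt (fun θ : ℝ => x * Real.cos θ) (x * (-Real.sin θ)) θ :=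
      (Real.hasDerivAt_cos θ).const_mul x
    have h2 := (h1.exp.neg).div_const x
    refine h2.congr_deriv ?_
    rw [div_eq_iff hx]
    ring
  rw [intervalIntegral.integral_eq_sub_of_hasDerivAt (fun θ _ => hd θ)
    (Continuous.intervalIntegrable (by fun_prop) _ _)]
  simp [Real.cos_two_pi]

theorem shift_int (g : ℝ → ℝ) (δ : ℝ) (hper : Function.Periodic g (2 * π)) :
    ∫ θ in (0:ℝ)..(2 * π), g (θ - δ) = ∫ θ in (0:ℝ)..(2 * π), g θ := by
  rw [intervalIntegral.integral_comp_sub_right g δ]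
  have := hper.intervalIntegral_add_eq (0 - δ) 0
  rw [show (2:ℝ) * π - δ = 0 - δ + 2 * π by ring]
  simpa using this

theorem selfconsistency_rewrite (K₁ L₁ r₁ r₂ ψ₁ ψ₂ : ℝ) (hL₁ : L₁ ≠ 0)
    (hr₁ : 0 ≤ r₁) (hr₂ : 0 ≤ r₂)
    (x : ℝ)
    (hxdef : x = Real.sqrt (K₁ ^ 2 * r₁ ^ 2 + L₁ ^ 2 * r₂ ^ 2 +
      2 * K₁ * L₁ * r₁ * r₂ * Real.cos (ψ₂ - ψ₁)))
    (hx : x ≠ 0) :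
    (∫ θ in (0:ℝ)..(2 * π), Real.cos (ψ₁ - θ) *
        Real.exp (L₁ * r₂ * Real.cos (ψ₂ - θ) + K₁ * r₁ * Real.cos (ψ₁ - θ))) /
      (∫ φ in (0:ℝ)..(2 * π),
        Real.exp (L₁ * r₂ * Real.cos (ψ₂ - φ) + K₁ * r₁ * Real.cos (ψ₁ - φ))) =
      (K₁ * r₁ + L₁ * r₂ * Real.cos (ψ₂ - ψ₁)) / 2 * W x ∧
    (∫ θ in (0:ℝ)..(2 * π), Real.sin (ψ₁ - θ) *
        Real.exp (L₁ * r₂ * Real.cos (ψ₂ - θ) + K₁ * r₁ * Real.cos (ψ₁ - θ))) /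
      (∫ φ in (0:ℝ)..(2 * π),
        Real.exp (L₁ * r₂ * Real.cos (ψ₂ - φ) + K₁ * r₁ * Real.cos (ψ₁ - φ))) =
      -(L₁ * r₂ * Real.sin (ψ₂ - ψ₁) / 2) * W x := by
  have hxpos : 0 < x := lt_of_le_of_ne (hxdef ▸ Real.sqrt_nonneg _) (Ne.symm hx)
  have hrad : K₁ ^ 2 * r₁ ^ 2 + L₁ ^ 2 * r₂ ^ 2 +
      2 * K₁ * L₁ * r₁ * r₂ * Real.cos (ψ₂ - ψ₁) =
      (K₁ * r₁ * Real.cos ψ₁ + L₁ * r₂ * Real.cos ψ₂) ^ 2 +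
      (K₁ * r₁ * Real.sin ψ₁ + L₁ * r₂ * Real.sin ψ₂) ^ 2 := by
    rw [Real.cos_sub]
    linear_combination (-(K₁ * r₁) ^ 2) * Real.sin_sq_add_cos_sq ψ₁ +
      (-(L₁ * r₂) ^ 2) * Real.sin_sq_add_cos_sq ψ₂
  have hx2 : x ^ 2 = (K₁ * r₁ * Real.cos ψ₁ + L₁ * r₂ * Real.cos ψ₂) ^ 2 +
      (K₁ * r₁ * Real.sin ψ₁ + L₁ * r₂ * Real.sin ψ₂) ^ 2 := by
    rw [hxdef, hrad]
    exact Real.sq_sqrt (by positivity)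
  obtain ⟨δ, hc, hs⟩ := exists_polar _ _ x hxpos hx2
  have hexp : ∀ θ : ℝ, L₁ * r₂ * Real.cos (ψ₂ - θ) + K₁ * r₁ * Real.cos (ψ₁ - θ) =
      x * Real.cos (θ - δ) := by
    intro θ
    rw [Real.cos_sub, Real.cos_sub, Real.cos_sub]
    linear_combination (-Real.cos θ) * hc + (-Real.sin θ) * hs
  have hcA : x * Real.cos (ψ₁ - δ) = K₁ * r₁ + L₁ * r₂ * Real.cos (ψ₂ - ψ₁) := by
    rw [Real.cos_sub, Real.cos_sub]
    linear_combination Real.cos ψ₁ * hc + Real.sin ψ₁ * hs +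
      (K₁ * r₁) * Real.sin_sq_add_cos_sq ψ₁
  have hsA : x * Real.sin (ψ₁ - δ) = -(L₁ * r₂ * Real.sin (ψ₂ - ψ₁)) := by
    rw [Real.sin_sub, Real.sin_sub]
    linear_combination Real.sin ψ₁ * hc - Real.cos ψ₁ * hs
  set N := ∫ θ in (0:ℝ)..(2 * π), Real.cos θ * Real.exp (x * Real.cos θ) with hN
  set D := ∫ θ in (0:ℝ)..(2 * π), Real.exp (x * Real.cos θ) with hDdef
  have hS := sin_exp_int x hx
  -- denominator
  have hD : (∫ φ in (0:ℝ)..(2 * π),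
      Real.exp (L₁ * r₂ * Real.cos (ψ₂ - φ) + K₁ * r₁ * Real.cos (ψ₁ - φ))) = D := by
    calc (∫ φ in (0:ℝ)..(2 * π),
        Real.exp (L₁ * r₂ * Real.cos (ψ₂ - φ) + K₁ * r₁ * Real.cos (ψ₁ - φ)))
        = ∫ φ in (0:ℝ)..(2 * π), (fun u => Real.exp (x * Real.cos u)) (φ - δ) := by
          apply intervalIntegral.integral_congr
          intro θ _
          simp only
          rw [hexp θ]
      _ = D := shift_int (fun u => Real.exp (x * Real.cos u)) δ
          (fun u => by simp [Real.cos_add_two_pi])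
  -- generic numerator lemma
  have hgen : ∀ A : ℝ, (∫ θ in (0:ℝ)..(2 * π),
      Real.cos (A - (θ - δ)) * Real.exp (x * Real.cos (θ - δ)))
      = Real.cos A * N := by
    intro A
    have hper : Function.Periodic
        (fun u => Real.cos (A - u) * Real.exp (x * Real.cos u)) (2 * π) := by
      intro u
      simp only
      rw [show A - (u + 2 * π) = (A - u) - 2 * π by ring, Real.cos_sub_two_pi,
        Real.cos_add_two_pi]
    calc (∫ θ in (0:ℝ)..(2 * π),
        Real.cos (A - (θ - δ)) * Real.exp (x * Real.cos (θ - δ)))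
        = ∫ u in (0:ℝ)..(2 * π), Real.cos (A - u) * Real.exp (x * Real.cos u) :=
          shift_int _ δ hper
      _ = ∫ u in (0:ℝ)..(2 * π),
          (Real.cos A * (Real.cos u * Real.exp (x * Real.cos u)) +
           Real.sin A * (Real.sin u * Real.exp (x * Real.cos u))) := by
          apply intervalIntegral.integral_congr
          intro u _
          dsimp only
          rw [Real.cos_sub]; ring
      _ = Real.cos A * N + Real.sin A *
          (∫ u in (0:ℝ)..(2 * π), Real.sin u * Real.exp (x * Real.cos u)) := by
          rw [intervalIntegral.integral_add
            (Continuous.intervalIntegrable (by fun_prop) _ _)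
            (Continuous.intervalIntegrable (by fun_prop) _ _),
            intervalIntegral.integral_const_mul, intervalIntegral.integral_const_mul]
      _ = Real.cos A * N := by rw [hS]; ring
  have hgensin : ∀ A : ℝ, (∫ θ in (0:ℝ)..(2 * π),
      Real.sin (A - (θ - δ)) * Real.exp (x * Real.cos (θ - δ)))
      = Real.sin A * N := by
    intro A
    have hper : Function.Periodic
        (fun u => Real.sin (A - u) * Real.exp (x * Real.cos u)) (2 * π) := by
      intro u
      simp only
      rw [show A - (u + 2 * π) = (A - u) - 2 * π by ring, Real.sin_sub_two_pi,
        Real.cos_add_two_pi]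
    calc (∫ θ in (0:ℝ)..(2 * π),
        Real.sin (A - (θ - δ)) * Real.exp (x * Real.cos (θ - δ)))
        = ∫ u in (0:ℝ)..(2 * π), Real.sin (A - u) * Real.exp (x * Real.cos u) :=
          shift_int _ δ hper
      _ = ∫ u in (0:ℝ)..(2 * π),
          (Real.sin A * (Real.cos u * Real.exp (x * Real.cos u)) -
           Real.cos A * (Real.sin u * Real.exp (x * Real.cos u))) := by
          apply intervalIntegral.integral_congr
          intro u _
          dsimp only
          rw [Real.sin_sub]; ring
      _ = Real.sin A * N - Real.cos A *
          (∫ u in (0:ℝ)..(2 * π), Real.sin u * Real.exp (x * Real.cos u)) := by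
          rw [intervalIntegral.integral_sub
            (Continuous.intervalIntegrable (by fun_prop) _ _)
            (Continuous.intervalIntegrable (by fun_prop) _ _),
            intervalIntegral.integral_const_mul, intervalIntegral.integral_const_mul]
      _ = Real.sin A * N := by rw [hS]; ring
  have hNc : (∫ θ in (0:ℝ)..(2 * π), Real.cos (ψ₁ - θ) *
      Real.exp (L₁ * r₂ * Real.cos (ψ₂ - θ) + K₁ * r₁ * Real.cos (ψ₁ - θ)))
      = Real.cos (ψ₁ - δ) * N := by
    rw [← hgen (ψ₁ - δ)]
    apply intervalIntegral.integral_congr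
    intro θ _
    dsimp only
    rw [hexp θ, show ψ₁ - δ - (θ - δ) = ψ₁ - θ by ring]
  have hNs : (∫ θ in (0:ℝ)..(2 * π), Real.sin (ψ₁ - θ) *
      Real.exp (L₁ * r₂ * Real.cos (ψ₂ - θ) + K₁ * r₁ * Real.cos (ψ₁ - θ)))
      = Real.sin (ψ₁ - δ) * N := by
    rw [← hgensin (ψ₁ - δ)]
    apply intervalIntegral.integral_congr
    intro θ _
    dsimp only
    rw [hexp θ, show ψ₁ - δ - (θ - δ) = ψ₁ - θ by ring]
  have hV : N / D = V x := rfl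
  constructor
  · rw [hNc, hD, mul_div_assoc, hV, W]
    field_simp
    linear_combination V x * hcA
  · rw [hNs, hD, mul_div_assoc, hV, W]
    field_simp
    linear_combination V x * hsA
end

section
/- Let K₁ ∈ ℝ and L₁ > 0. Then there exists exactly one r ∈ (0,1) such that V(K₁·r + L₁) = r; that is, the self-consistency curve Γ₁ = { (r₁, r₂) ∈ [0,1]² : V(K₁·r₁ + L₁·r₂) = r₁ } meets the line r₂ = 1 in exactly one point (r, 1) with r ∈ (0,1). -/
open Real Set MeasureTheory Filter Metric

namespace Gamma1

noncomputable def J (ρ : ℝ → ℝ) (x : ℝ) : ℝ :=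
  ∫ θ in (0:ℝ)..(2*π), ρ θ * Real.exp (x * Real.cos θ)

lemma contJ (ρ : ℝ → ℝ) (hρ : Continuous ρ) (x : ℝ) :
    Continuous fun θ => ρ θ * Real.exp (x * Real.cos θ) :=
  hρ.mul (Real.continuous_exp.comp (continuous_const.mul Real.continuous_cos))

lemma intJ (ρ : ℝ → ℝ) (hρ : Continuous ρ) (x : ℝ) :
    IntervalIntegrable (fun θ => ρ θ * Real.exp (x * Real.cos θ)) volume 0 (2*π) :=
  (contJ ρ hρ x).intervalIntegrable _ _

lemma hasDerivAt_J (ρ : ℝ → ℝ) (hρ : Continuous ρ) (hρ1 : ∀ θ, |ρ θ| ≤ 1) (x₀ : ℝ) :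
    HasDerivAt (J ρ) (J (fun θ => ρ θ * Real.cos θ) x₀) x₀ := by
  have key := intervalIntegral.hasDerivAt_integral_of_dominated_loc_of_deriv_le
    (F := fun x θ => ρ θ * Real.exp (x * Real.cos θ))
    (F' := fun x θ => ρ θ * Real.cos θ * Real.exp (x * Real.cos θ))
    (x₀ := x₀) (a := (0:ℝ)) (b := 2*π) (μ := volume)
    (bound := fun _ => Real.exp (|x₀| + 1)) (s := ball x₀ 1) (ball_mem_nhds x₀ one_pos)
    (Eventually.of_forall fun x => (contJ ρ hρ x).aestronglyMeasurable)
    (intJ ρ hρ x₀)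
    ((contJ _ (hρ.mul Real.continuous_cos) x₀).aestronglyMeasurable)
    ?_ intervalIntegrable_const ?_
  · exact key.2
  · refine Eventually.of_forall fun t _ x hx => ?_
    have h1 : |ρ t * Real.cos t| ≤ 1 := by
      have := abs_mul (ρ t) (Real.cos t)
      nlinarith [hρ1 t, abs_cos_le_one t, abs_nonneg (ρ t), abs_nonneg (Real.cos t)]
    have h2 : x * Real.cos t ≤ |x₀| + 1 := by
      have hx' : |x - x₀| < 1 := by simpa [Real.dist_eq] using hx
      have : |x| ≤ |x₀| + 1 := by
        have := abs_sub_abs_le_abs_sub x x₀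
        linarith
      calc x * Real.cos t ≤ |x * Real.cos t| := le_abs_self _
        _ = |x| * |Real.cos t| := abs_mul _ _
        _ ≤ (|x₀| + 1) * 1 := by
            apply mul_le_mul this (abs_cos_le_one t) (abs_nonneg _) (by positivity)
        _ = |x₀| + 1 := mul_one _
    calc ‖ρ t * Real.cos t * Real.exp (x * Real.cos t)‖
        = |ρ t * Real.cos t| * Real.exp (x * Real.cos t) := by
          rw [Real.norm_eq_abs, abs_mul, abs_of_pos (Real.exp_pos _)]
      _ ≤ 1 * Real.exp (|x₀| + 1) := by
          apply mul_le_mul h1 (Real.exp_le_exp.2 h2) (Real.exp_pos _).le one_pos.le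
      _ = Real.exp (|x₀| + 1) := one_mul _
  · refine Eventually.of_forall fun t _ x _ => ?_
    have h : HasDerivAt (fun x : ℝ => x * Real.cos t) (Real.cos t) x := hasDerivAt_mul_const _
    have h2 := (h.exp).const_mul (ρ t)
    refine h2.congr_deriv ?_
    ring

lemma twopi_pos : (0:ℝ) < 2*π := by positivity

lemma J_congr (ρ₁ ρ₂ : ℝ → ℝ) (h : ∀ θ, ρ₁ θ = ρ₂ θ) (x : ℝ) : J ρ₁ x = J ρ₂ x := by
  unfold J; congr 1; funext θ; rw [h]

lemma J_sub (ρ₁ ρ₂ : ℝ → ℝ) (h₁ : Continuous ρ₁) (h₂ : Continuous ρ₂) (x : ℝ) :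
    J (fun θ => ρ₁ θ - ρ₂ θ) x = J ρ₁ x - J ρ₂ x := by
  unfold J
  rw [← intervalIntegral.integral_sub (intJ ρ₁ h₁ x) (intJ ρ₂ h₂ x)]
  congr 1; funext θ; ring

lemma J_add (ρ₁ ρ₂ : ℝ → ℝ) (h₁ : Continuous ρ₁) (h₂ : Continuous ρ₂) (x : ℝ) :
    J (fun θ => ρ₁ θ + ρ₂ θ) x = J ρ₁ x + J ρ₂ x := by
  unfold J
  rw [← intervalIntegral.integral_add (intJ ρ₁ h₁ x) (intJ ρ₂ h₂ x)]
  congr 1; funext θ; ring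

lemma J_smul (c : ℝ) (ρ : ℝ → ℝ) (x : ℝ) :
    J (fun θ => c * ρ θ) x = c * J ρ x := by
  unfold J
  rw [← intervalIntegral.integral_const_mul]
  congr 1; funext θ; ring

/-! ### the six basic integrals -/

noncomputable def Fi : ℝ → ℝ := J (fun _ => 1)
noncomputable def Gi : ℝ → ℝ := J Real.cos
noncomputable def Hi : ℝ → ℝ := J (fun θ => Real.cos θ * Real.cos θ)
noncomputable def Si : ℝ → ℝ := J (fun θ => Real.sin θ * Real.sin θ)
noncomputable def Ti : ℝ → ℝ := J (fun θ => Real.sin θ * Real.sin θ * Real.cos θ)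
noncomputable def G2 : ℝ → ℝ := J (fun θ => Real.cos (2*θ))

lemma V_eq (x : ℝ) : V x = Gi x / Fi x := by
  unfold V Gi Fi J
  congr 1
  apply intervalIntegral.integral_congr
  intro θ _
  simp

lemma F_pos (x : ℝ) : 0 < Fi x := by
  apply intervalIntegral.intervalIntegral_pos_of_pos (intJ _ continuous_const x) _ twopi_pos
  intro t; positivity

lemma G_zero : Gi 0 = 0 := by
  unfold Gi J
  simp [Real.sin_two_pi]

lemma F_sub_G_pos (x : ℝ) : 0 < Fi x - Gi x := by
  unfold Fi Gi
  rw [← J_sub _ _ continuous_const Real.continuous_cos]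
  apply intervalIntegral.intervalIntegral_pos_of_pos_on (intJ _ (by continuity) x) _ twopi_pos
  intro t ht
  have hc : Real.cos t < 1 := by
    rcases lt_or_eq_of_le (Real.cos_le_one t) with h | h
    · exact h
    · exfalso
      have := (Real.cos_eq_one_iff_of_lt_of_lt
        (by nlinarith [ht.1, pi_pos] : -(2*π) < t) ht.2).mp h
      exact lt_irrefl 0 (this ▸ ht.1)
  have := Real.exp_pos (x * Real.cos t)
  nlinarith

lemma H_pos (x : ℝ) : 0 < Hi x := by
  have h1 : (1:ℝ) ≤ 2*π := by nlinarith [pi_gt_three]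
  have hsplit := intervalIntegral.integral_add_adjacent_intervals
    (a := (0:ℝ)) (b := 1) (c := 2*π) (μ := volume)
    ((contJ (fun θ => Real.cos θ * Real.cos θ) (by continuity) x).intervalIntegrable _ _)
    ((contJ (fun θ => Real.cos θ * Real.cos θ) (by continuity) x).intervalIntegrable _ _)
  have h2 : 0 < ∫ θ in (0:ℝ)..1, Real.cos θ * Real.cos θ * Real.exp (x * Real.cos θ) := by
    apply intervalIntegral.intervalIntegral_pos_of_pos_on
      ((contJ (fun θ => Real.cos θ * Real.cos θ) (by continuity) x).intervalIntegrable _ _)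
      _ one_pos
    intro t ht
    have : 0 < Real.cos t := by
      apply Real.cos_pos_of_mem_Ioo
      constructor <;> nlinarith [ht.1, ht.2, pi_gt_three]
    positivity
  have h3 : 0 ≤ ∫ θ in (1:ℝ)..2*π, Real.cos θ * Real.cos θ * Real.exp (x * Real.cos θ) := by
    apply intervalIntegral.integral_nonneg h1
    intro u _
    nlinarith [mul_self_nonneg (Real.cos u), Real.exp_pos (x * Real.cos u),
      mul_nonneg (mul_self_nonneg (Real.cos u)) (Real.exp_pos (x * Real.cos u)).le]
  unfold Hi J
  rw [← hsplit]
  linarith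

/-! ### pointwise identities between the integrals -/

lemma H_add_S (x : ℝ) : Hi x + Si x = Fi x := by
  unfold Hi Si Fi
  rw [← J_add _ _ (by continuity) (by continuity)]
  apply J_congr
  intro θ
  nlinarith [Real.sin_sq_add_cos_sq θ]

lemma G2_lin (x : ℝ) : G2 x = 2 * Hi x - Fi x := by
  unfold G2 Hi Fi
  rw [← J_smul 2 (fun θ => Real.cos θ * Real.cos θ), ← J_sub _ _ (by continuity) continuous_const]
  apply J_congr
  intro θ
  rw [Real.cos_two_mul]
  ring

/-! ### integration by parts -/

lemma G_eq_xS (x : ℝ) : Gi x = x * Si x := by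
  have hB : IntervalIntegrable
      (fun θ => x * (Real.sin θ * Real.sin θ * Real.exp (x * Real.cos θ))) volume 0 (2*π) :=
    (intJ (fun θ => Real.sin θ * Real.sin θ) (by continuity) x).const_mul x
  have hderiv : ∀ θ ∈ uIcc (0:ℝ) (2*π),
      HasDerivAt (fun θ => Real.sin θ * Real.exp (x * Real.cos θ))
        (Real.cos θ * Real.exp (x * Real.cos θ)
          - x * (Real.sin θ * Real.sin θ * Real.exp (x * Real.cos θ))) θ := by
    intro θ _
    have h1 : HasDerivAt (fun θ : ℝ => x * Real.cos θ) (x * (-Real.sin θ)) θ :=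
      (Real.hasDerivAt_cos θ).const_mul x
    have h2 := (Real.hasDerivAt_sin θ).mul h1.exp
    refine h2.congr_deriv ?_
    ring
  have h0 := intervalIntegral.integral_eq_sub_of_hasDerivAt hderiv
    ((intJ _ Real.continuous_cos x).sub hB)
  rw [Real.sin_zero, Real.sin_two_pi] at h0
  simp only [zero_mul, sub_zero, sub_self] at h0
  have hsplit := intervalIntegral.integral_sub (intJ _ Real.continuous_cos x) hB
  have hBval := intervalIntegral.integral_const_mul (μ := volume) (a := (0:ℝ)) (b := 2*π) x
    (fun θ => Real.sin θ * Real.sin θ * Real.exp (x * Real.cos θ))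
  rw [h0] at hsplit
  unfold Gi Si J
  linarith [hsplit, hBval]

lemma G2_eq_xT (x : ℝ) : G2 x = x * Ti x := by
  have hA : IntervalIntegrable
      (fun θ => 2 * (Real.cos (2*θ) * Real.exp (x * Real.cos θ))) volume 0 (2*π) :=
    (intJ (fun θ => Real.cos (2*θ)) (by continuity) x).const_mul 2
  have hB : IntervalIntegrable
      (fun θ => x * (2 * (Real.sin θ * Real.sin θ * Real.cos θ * Real.exp (x * Real.cos θ))))
      volume 0 (2*π) :=
    ((intJ (fun θ => Real.sin θ * Real.sin θ * Real.cos θ)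
      (by continuity) x).const_mul 2).const_mul x
  have hderiv : ∀ θ ∈ uIcc (0:ℝ) (2*π),
      HasDerivAt (fun θ => Real.sin (2*θ) * Real.exp (x * Real.cos θ))
        (2 * (Real.cos (2*θ) * Real.exp (x * Real.cos θ))
          - x * (2 * (Real.sin θ * Real.sin θ * Real.cos θ * Real.exp (x * Real.cos θ)))) θ := by
    intro θ _
    have h2θ : HasDerivAt (fun θ : ℝ => 2*θ) 2 θ := by
      simpa using (hasDerivAt_id θ).const_mul 2
    have hs : HasDerivAt (fun θ : ℝ => Real.sin (2*θ)) (Real.cos (2*θ) * 2) θ :=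
      (Real.hasDerivAt_sin (2*θ)).comp θ h2θ
    have h1 : HasDerivAt (fun θ : ℝ => x * Real.cos θ) (x * (-Real.sin θ)) θ :=
      (Real.hasDerivAt_cos θ).const_mul x
    have h2 := hs.mul h1.exp
    refine h2.congr_deriv ?_
    rw [Real.sin_two_mul]
    ring
  have h0 := intervalIntegral.integral_eq_sub_of_hasDerivAt hderiv (hA.sub hB)
  have hend : Real.sin (2*(2*π)) = 0 := by
    rw [show (2:ℝ)*(2*π) = 2*π + 2*π by ring, Real.sin_add_two_pi, Real.sin_two_pi]
  rw [hend] at h0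
  simp only [mul_zero, zero_mul, sub_zero, Real.sin_zero, sub_self] at h0
  have hsplit := intervalIntegral.integral_sub hA hB
  rw [h0] at hsplit
  have hAval := intervalIntegral.integral_const_mul (μ := volume) (a := (0:ℝ)) (b := 2*π) (2:ℝ)
    (fun θ => Real.cos (2*θ) * Real.exp (x * Real.cos θ))
  have hBval := intervalIntegral.integral_const_mul (μ := volume) (a := (0:ℝ)) (b := 2*π) (x*2)
    (fun θ => Real.sin θ * Real.sin θ * Real.cos θ * Real.exp (x * Real.cos θ))
  have hBval2 : (∫ θ in (0:ℝ)..2*π,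
      x * (2 * (Real.sin θ * Real.sin θ * Real.cos θ * Real.exp (x * Real.cos θ))))
      = x * 2 * Ti x := by
    unfold Ti J; rw [← hBval]; congr 1; funext θ; ring
  unfold G2 Ti J at *
  linarith [hsplit, hAval, hBval2]

/-! ### T is nonnegative for nonnegative x -/

lemma T_nonneg {x : ℝ} (hx : 0 ≤ x) : 0 ≤ Ti x := by
  set g : ℝ → ℝ := fun θ => Real.sin θ * Real.sin θ * Real.cos θ * Real.exp (x * Real.cos θ)
    with hg
  have hgc : Continuous g := by
    have := contJ (fun θ => Real.sin θ * Real.sin θ * Real.cos θ) (by continuity) x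
    exact this
  have hper : Function.Periodic g (2*π) := by
    intro θ
    simp only [hg, Real.sin_add_two_pi, Real.cos_add_two_pi]
  have hshift := hper.intervalIntegral_add_eq 0 (-(π/2))
  rw [zero_add] at hshift
  have hsplit := intervalIntegral.integral_add_adjacent_intervals
    (a := -(π/2)) (b := π/2) (c := -(π/2) + 2*π) (μ := volume)
    (hgc.intervalIntegrable _ _) (hgc.intervalIntegrable _ _)
  have hcomp := intervalIntegral.integral_comp_sub_left (a := -(π/2)) (b := π/2) g π
  have e1 : π - π/2 = π/2 := by ring
  have e2 : π - -(π/2) = -(π/2) + 2*π := by ring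
  rw [e1, e2] at hcomp
  have hgc2 : Continuous fun θ => g (π - θ) :=
    hgc.comp (continuous_const.sub continuous_id)
  have hadd := intervalIntegral.integral_add (a := -(π/2)) (b := π/2) (μ := volume)
    (f := g) (g := fun θ => g (π - θ))
    (hgc.intervalIntegrable _ _) (hgc2.intervalIntegrable _ _)
  have hpi : -(π/2) ≤ π/2 := by linarith [pi_pos]
  have hnn : 0 ≤ ∫ θ in (-(π/2))..(π/2), (g θ + g (π - θ)) := by
    apply intervalIntegral.integral_nonneg hpi
    intro u hu
    have hcos : 0 ≤ Real.cos u := Real.cos_nonneg_of_mem_Icc hu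
    simp only [hg, Real.sin_pi_sub, Real.cos_pi_sub]
    have hE : Real.exp (x * -Real.cos u) ≤ Real.exp (x * Real.cos u) := by
      apply Real.exp_le_exp.2
      nlinarith
    have key : 0 ≤ Real.sin u * Real.sin u * Real.cos u *
        (Real.exp (x * Real.cos u) - Real.exp (x * -Real.cos u)) :=
      mul_nonneg (mul_nonneg (mul_self_nonneg _) hcos) (sub_nonneg.2 hE)
    nlinarith [key]
  have : Ti x = ∫ θ in (-(π/2))..(π/2), (g θ + g (π - θ)) := by
    rw [hadd]
    unfold Ti J
    rw [hshift, ← hsplit, hcomp]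
  rw [this]
  exact hnn

lemma G2_nonneg {x : ℝ} (hx : 0 ≤ x) : 0 ≤ G2 x := by
  rw [G2_eq_xT]
  exact mul_nonneg hx (T_nonneg hx)

/-! ### derivatives -/

lemma hasDerivAt_F (x : ℝ) : HasDerivAt Fi (Gi x) x := by
  have := hasDerivAt_J (fun _ => 1) continuous_const (fun θ => by norm_num) x
  have heq : J (fun θ => 1 * Real.cos θ) x = Gi x := J_congr _ _ (fun θ => one_mul _) x
  rw [heq] at this
  exact this

lemma hasDerivAt_G (x : ℝ) : HasDerivAt Gi (Hi x) x :=
  hasDerivAt_J Real.cos Real.continuous_cos abs_cos_le_one x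

lemma G_pos {x : ℝ} (hx : 0 < x) : 0 < Gi x := by
  have hmono : StrictMonoOn Gi (Ici 0) := by
    apply strictMonoOn_of_deriv_pos (convex_Ici 0)
    · exact fun y _ => ((hasDerivAt_G y).differentiableAt).continuousAt.continuousWithinAt
    · intro y _
      rw [(hasDerivAt_G y).deriv]
      exact H_pos y
  have := hmono (self_mem_Ici) (mem_Ici.2 hx.le) hx
  rwa [G_zero] at this

/-- Cauchy–Schwarz: `G² ≤ H·F`. -/
lemma G_sq_le (x : ℝ) : Gi x ^ 2 ≤ Hi x * Fi x := by
  set t : ℝ := Gi x / Fi x with ht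
  have hF := F_pos x
  have hexp : J (fun θ => (Real.cos θ - t)^2) x = Hi x - 2*t*Gi x + t^2*Fi x := by
    have e1 : ∀ θ, (Real.cos θ - t)^2
        = (Real.cos θ * Real.cos θ + t^2 * 1) - (2*t) * Real.cos θ := by
      intro θ; ring
    rw [J_congr _ _ e1, J_sub _ _ (by continuity) (by continuity),
      J_add _ _ (by continuity) continuous_const, J_smul, J_smul]
    unfold Hi Gi Fi
    ring
  have hnn : 0 ≤ J (fun θ => (Real.cos θ - t)^2) x := by
    apply intervalIntegral.integral_nonneg twopi_pos.le
    intro u _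
    positivity
  rw [hexp] at hnn
  have htF : t * Fi x = Gi x := div_mul_cancel₀ _ hF.ne'
  have hprod := mul_nonneg hnn hF.le
  have e : (Hi x - 2*t*Gi x + t^2*Fi x) * Fi x
      = Hi x * Fi x - 2*(t*Fi x)*Gi x + (t*Fi x)^2 := by ring
  rw [htF] at e
  rw [e] at hprod
  linarith [hprod, (by ring : (2:ℝ)*Gi x*Gi x = 2*Gi x^2)]

lemma hasDerivAt_V (x : ℝ) :
    HasDerivAt V ((Hi x * Fi x - Gi x * Gi x) / Fi x ^ 2) x := by
  have h := (hasDerivAt_G x).div (hasDerivAt_F x) (F_pos x).ne'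
  have : V = fun y => Gi y / Fi y := funext V_eq
  rw [this]
  exact h

lemma V_differentiable : Differentiable ℝ V := fun x => (hasDerivAt_V x).differentiableAt

lemma V_mono : Monotone V := by
  apply monotone_of_deriv_nonneg V_differentiable
  intro x
  rw [(hasDerivAt_V x).deriv]
  apply div_nonneg _ (sq_nonneg _)
  have := G_sq_le x
  nlinarith [this]

lemma V_lt_one (x : ℝ) : V x < 1 := by
  rw [V_eq]
  rw [div_lt_one (F_pos x)]
  linarith [F_sub_G_pos x]

lemma V_pos {x : ℝ} (hx : 0 < x) : 0 < V x := by
  rw [V_eq]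
  exact div_pos (G_pos hx) (F_pos x)

/-! ### the function ψ and strict decrease of V x / x -/

noncomputable def psi (x : ℝ) : ℝ := 2 * Gi x * Fi x - x * (Fi x^2 - Gi x^2)

lemma psi_zero : psi 0 = 0 := by
  unfold psi
  rw [G_zero]
  ring

lemma hasDerivAt_psi (y : ℝ) :
    HasDerivAt psi (Fi y * G2 y + Gi y ^ 2) y := by
  have hF := hasDerivAt_F y
  have hG := hasDerivAt_G y
  have d1 : HasDerivAt (fun x => 2 * Gi x * Fi x)
      (2 * Hi y * Fi y + 2 * Gi y * Gi y) y := by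
    exact (hG.const_mul 2).mul hF
  have d2 : HasDerivAt (fun x => x * (Fi x^2 - Gi x^2))
      (1 * (Fi y^2 - Gi y^2) + y * (2 * Fi y ^ 1 * Gi y - 2 * Gi y ^ 1 * Hi y)) y :=
    (hasDerivAt_id y).mul ((hF.pow 2).sub (hG.pow 2))
  have d := d1.sub d2
  unfold psi
  refine d.congr_deriv ?_
  have hH : Hi y = Fi y - Si y := by linarith [H_add_S y]
  have hGS : Gi y = y * Si y := G_eq_xS y
  rw [G2_lin, hH, hGS]
  ring

lemma psi_pos {x : ℝ} (hx : 0 < x) : 0 < psi x := by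
  have hmono : StrictMonoOn psi (Ici 0) := by
    apply strictMonoOn_of_deriv_pos (convex_Ici 0)
    · exact fun y _ => ((hasDerivAt_psi y).differentiableAt).continuousAt.continuousWithinAt
    · intro y hy
      rw [interior_Ici] at hy
      rw [(hasDerivAt_psi y).deriv]
      have h1 : 0 ≤ Fi y * G2 y := mul_nonneg (F_pos y).le (G2_nonneg (le_of_lt hy))
      have h2 : 0 < Gi y ^ 2 := pow_pos (G_pos hy) 2
      linarith
  have := hmono self_mem_Ici (mem_Ici.2 hx.le) hx
  rwa [psi_zero] at this

/-- the key inequality: `V x / x` is strictly decreasing on `(0, ∞)`. -/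
lemma key_ineq {a b : ℝ} (ha : 0 < a) (hab : a < b) : V b * a < V a * b := by
  have hanti : StrictAntiOn (fun x => V x / x) (Ioi 0) := by
    apply strictAntiOn_of_deriv_neg (convex_Ioi 0)
    · exact ContinuousOn.div V_differentiable.continuous.continuousOn
        continuousOn_id (fun y hy => ne_of_gt hy)
    · intro y hy
      rw [interior_Ioi] at hy
      have hy0 : (0:ℝ) < y := hy
      have hdv : HasDerivAt (fun x => V x / x)
          (((Hi y * Fi y - Gi y * Gi y) / Fi y ^ 2 * y - V y * 1) / y ^ 2) y :=
        (hasDerivAt_V y).div (hasDerivAt_id y) hy0.ne'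
      rw [hdv.deriv]
      apply div_neg_of_neg_of_pos _ (pow_pos hy0 2)
      have hF := F_pos y
      have hnum : (Hi y * Fi y - Gi y * Gi y) / Fi y ^ 2 * y - V y * 1
          = (y * (Hi y * Fi y - Gi y * Gi y) - Gi y * Fi y) / Fi y ^ 2 := by
        rw [V_eq]
        field_simp
      rw [hnum]
      apply div_neg_of_neg_of_pos _ (pow_pos hF 2)
      have hpsi := psi_pos hy0
      have hH : Hi y = Fi y - Si y := by linarith [H_add_S y]
      have hGS : Gi y = y * Si y := G_eq_xS y
      have hnum2 : y * (Hi y * Fi y - Gi y * Gi y) - Gi y * Fi y = -(psi y) := by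
        unfold psi
        rw [hH, hGS]
        ring
      rw [hnum2]
      linarith [hpsi]
  have h := hanti (mem_Ioi.2 ha) (mem_Ioi.2 (ha.trans hab)) hab
  simp only at h
  rw [div_lt_div_iff₀ (ha.trans hab) ha] at h
  linarith

end Gamma1

open Gamma1 in
theorem gamma1_meets_top_once (K₁ L₁ : ℝ) (hL₁ : 0 < L₁) :
    ∃! r : ℝ, r ∈ Ioo (0:ℝ) 1 ∧ V (K₁ * r + L₁) = r := by
  -- existence via the intermediate value theorem
  have hVcont : Continuous V := V_differentiable.continuous
  set h : ℝ → ℝ := fun r => V (K₁ * r + L₁) - r with hh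
  have hhc : Continuous h := by
    apply Continuous.sub _ continuous_id
    exact hVcont.comp (by continuity)
  have h0 : 0 < h 0 := by
    have : V (K₁ * 0 + L₁) = V L₁ := by norm_num
    simp only [hh, this]
    simpa using V_pos hL₁
  have h1 : h 1 < 0 := by
    simp only [hh]
    have := V_lt_one (K₁ * 1 + L₁)
    linarith
  have hiv := intermediate_value_Ioo' (by norm_num : (0:ℝ) ≤ 1) hhc.continuousOn
  have hmem : (0:ℝ) ∈ Ioo (h 1) (h 0) := ⟨h1, h0⟩
  obtain ⟨r, hr, hr0⟩ := hiv hmem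
  -- uniqueness helper
  have huniq : ∀ u v : ℝ, u ∈ Ioo (0:ℝ) 1 → V (K₁ * u + L₁) = u →
      v ∈ Ioo (0:ℝ) 1 → V (K₁ * v + L₁) = v → u < v → False := by
    intro u v hu hVu hv hVv huv
    rcases lt_trichotomy K₁ 0 with hK | hK | hK
    · have harg : K₁ * v + L₁ ≤ K₁ * u + L₁ := by nlinarith
      have := V_mono harg
      rw [hVu, hVv] at this
      linarith
    · rw [hK] at hVu hVv
      simp only [zero_mul, zero_add] at hVu hVv
      rw [hVu] at hVv
      linarith
    · have ha : 0 < K₁ * u + L₁ := by nlinarith [hu.1]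
      have hab : K₁ * u + L₁ < K₁ * v + L₁ := by nlinarith
      have := key_ineq ha hab
      rw [hVu, hVv] at this
      nlinarith
  have hrsol : V (K₁ * r + L₁) = r := by
    have h2 : h r = 0 := hr0
    simp only [hh] at h2
    linarith
  refine ⟨r, ⟨hr, hrsol⟩, ?_⟩
  intro s hs
  rcases lt_trichotomy s r with hlt | heq | hgt
  · exact (huniq s r hs.1 hs.2 hr hrsol hlt).elim
  · exact heq
  · exact (huniq r s hr hrsol hs.1 hs.2 hgt).elim
end

section
/- Let K ∈ ℝ. There exists r > 0 with r = V(K·r) if and only if K > 2; moreover any such r lies in (0,1). -/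
open Real Set intervalIntegral MeasureTheory

namespace VFix

noncomputable def A (x : ℝ) : ℝ := ∫ θ in (0:ℝ)..(2 * π), Real.exp (x * Real.cos θ)
noncomputable def B (x : ℝ) : ℝ := ∫ θ in (0:ℝ)..(2 * π), Real.cos θ * Real.exp (x * Real.cos θ)
noncomputable def S (x : ℝ) : ℝ := ∫ θ in (0:ℝ)..(2 * π), Real.sin θ ^ 2 * Real.exp (x * Real.cos θ)

lemma V_eq (x : ℝ) : V x = B x / A x := rfl

lemma ii (g : ℝ → ℝ) (hg : Continuous g) (x a b : ℝ) :
    IntervalIntegrable (fun θ => g θ * Real.exp (x * Real.cos θ)) volume a b :=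
  (hg.mul (by fun_prop)).intervalIntegrable a b

lemma A_pos (x : ℝ) : 0 < A x := by
  apply intervalIntegral_pos_of_pos_on
    ((by fun_prop : Continuous fun θ => Real.exp (x * Real.cos θ)).intervalIntegrable _ _)
  · exact fun θ _ => Real.exp_pos _
  · positivity

lemma S_pos (x : ℝ) : 0 < S x := by
  have h1 : IntervalIntegrable (fun θ => Real.sin θ ^ 2 * Real.exp (x * Real.cos θ)) volume 0 π :=
    ii _ (by fun_prop) x 0 π
  have h2 : IntervalIntegrable (fun θ => Real.sin θ ^ 2 * Real.exp (x * Real.cos θ)) volume π (2*π) :=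
    ii _ (by fun_prop) x π (2*π)
  have hsplit := integral_add_adjacent_intervals h1 h2
  have hp1 : 0 < ∫ θ in (0:ℝ)..π, Real.sin θ ^ 2 * Real.exp (x * Real.cos θ) := by
    apply intervalIntegral_pos_of_pos_on h1
    · intro θ hθ
      have := Real.sin_pos_of_pos_of_lt_pi hθ.1 hθ.2
      positivity
    · exact pi_pos
  have hp2 : 0 ≤ ∫ θ in π..(2*π), Real.sin θ ^ 2 * Real.exp (x * Real.cos θ) := by
    apply integral_nonneg (by linarith [pi_pos])
    intro θ _; positivity
  unfold S
  rw [← hsplit]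
  linarith

lemma B_eq (x : ℝ) : B x = x * S x := by
  have hu : ∀ θ ∈ uIcc (0:ℝ) (2*π), HasDerivAt (fun t => Real.exp (x * Real.cos t))
      (Real.exp (x * Real.cos θ) * (x * -Real.sin θ)) θ := by
    intro θ _
    exact (((Real.hasDerivAt_cos θ).const_mul x).exp)
  have hv : ∀ θ ∈ uIcc (0:ℝ) (2*π), HasDerivAt Real.sin (Real.cos θ) θ :=
    fun θ _ => Real.hasDerivAt_sin θ
  have hu' : IntervalIntegrable (fun θ => Real.exp (x * Real.cos θ) * (x * -Real.sin θ)) volume 0 (2*π) :=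
    (by fun_prop : Continuous fun θ => Real.exp (x * Real.cos θ) * (x * -Real.sin θ)).intervalIntegrable _ _
  have hv' : IntervalIntegrable Real.cos volume 0 (2*π) := Real.continuous_cos.intervalIntegrable _ _
  have key := integral_mul_deriv_eq_deriv_mul hu hv hu' hv'
  have lhs : B x = ∫ θ in (0:ℝ)..(2*π), Real.exp (x * Real.cos θ) * Real.cos θ :=
    integral_congr fun θ _ => mul_comm _ _
  have hcongr : (∫ θ in (0:ℝ)..(2*π), Real.exp (x * Real.cos θ) * (x * -Real.sin θ) * Real.sin θ)
      = ∫ θ in (0:ℝ)..(2*π), (-x) * (Real.sin θ ^ 2 * Real.exp (x * Real.cos θ)) :=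
    integral_congr fun θ _ => by ring
  rw [lhs, key, hcongr, intervalIntegral.integral_const_mul]
  unfold S
  simp [Real.sin_two_pi]

lemma half (x : ℝ) (hx : 0 < x) : S x < A x / 2 := by
  set f : ℝ → ℝ := fun θ => (1/2 - Real.sin θ ^ 2) * Real.exp (x * Real.cos θ) with hf
  have hfc : Continuous f := by fun_prop
  set F : ℝ → ℝ := fun θ => (1/2 - Real.sin θ ^ 2) *
      (Real.exp (x * Real.cos θ) + Real.exp (x * -Real.cos θ)) with hF
  have hFc : Continuous F := by fun_prop
  set G : ℝ → ℝ := fun θ => (1/2 - Real.sin θ ^ 2) *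
      ((Real.exp (x * Real.cos θ) + Real.exp (x * -Real.cos θ))
        - (Real.exp (x * Real.sin θ) + Real.exp (x * -Real.sin θ))) with hG
  have e1 : (∫ θ in π..(2*π), f θ) = ∫ θ in (0:ℝ)..π, f θ := by
    have h := integral_comp_sub_left (a := 0) (b := π) f (2*π)
    rw [show 2*π - π = π by ring, show 2*π - 0 = 2*π by ring] at h
    rw [← h]
    refine integral_congr fun θ _ => ?_
    simp only [hf, Real.sin_sub, Real.cos_sub, Real.sin_two_pi, Real.cos_two_pi]
    ring_nf
  have e2 : (∫ θ in (π/2)..π, f θ) = ∫ θ in (0:ℝ)..(π/2),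
      (1/2 - Real.sin θ ^ 2) * Real.exp (x * -Real.cos θ) := by
    have h := integral_comp_sub_left (a := 0) (b := π/2) f π
    rw [show π - π/2 = π/2 by ring, show π - 0 = π by ring] at h
    rw [← h]
    refine integral_congr fun θ _ => ?_
    simp only [hf, Real.sin_pi_sub, Real.cos_pi_sub]
  have e3 : (∫ θ in (0:ℝ)..π, f θ) = ∫ θ in (0:ℝ)..(π/2), F θ := by
    have h1 : IntervalIntegrable f volume 0 (π/2) := hfc.intervalIntegrable _ _
    have h2 : IntervalIntegrable f volume (π/2) π := hfc.intervalIntegrable _ _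
    rw [← integral_add_adjacent_intervals h1 h2, e2,
      ← integral_add h1 ((by fun_prop : Continuous fun θ =>
        (1/2 - Real.sin θ ^ 2) * Real.exp (x * -Real.cos θ)).intervalIntegrable _ _)]
    exact integral_congr fun θ _ => by simp only [hf, hF]; ring
  have e4 : (∫ θ in (π/4)..(π/2), F θ) = ∫ θ in (0:ℝ)..(π/4),
      (1/2 - Real.cos θ ^ 2) * (Real.exp (x * Real.sin θ) + Real.exp (x * -Real.sin θ)) := by
    have h := integral_comp_sub_left (a := 0) (b := π/4) F (π/2)
    rw [show π/2 - π/4 = π/4 by ring, show π/2 - 0 = π/2 by ring] at h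
    rw [← h]
    refine integral_congr fun θ _ => ?_
    simp only [hF, Real.sin_pi_div_two_sub, Real.cos_pi_div_two_sub]
  have e5 : (∫ θ in (0:ℝ)..(π/2), F θ) = ∫ θ in (0:ℝ)..(π/4), G θ := by
    have h1 : IntervalIntegrable F volume 0 (π/4) := hFc.intervalIntegrable _ _
    have h2 : IntervalIntegrable F volume (π/4) (π/2) := hFc.intervalIntegrable _ _
    rw [← integral_add_adjacent_intervals h1 h2, e4,
      ← integral_add h1 ((by fun_prop : Continuous fun θ => (1/2 - Real.cos θ ^ 2) *
        (Real.exp (x * Real.sin θ) + Real.exp (x * -Real.sin θ))).intervalIntegrable _ _)]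
    refine integral_congr fun θ _ => ?_
    simp only [hF, hG]
    linear_combination (-(Real.exp (x * Real.sin θ) + Real.exp (x * -Real.sin θ))) * Real.sin_sq_add_cos_sq θ
  have e6 : 0 < ∫ θ in (0:ℝ)..(π/4), G θ := by
    apply intervalIntegral_pos_of_pos_on ((by fun_prop : Continuous G).intervalIntegrable _ _)
    · intro θ hθ
      have hπ := pi_pos
      have hs : 0 < Real.sin θ := Real.sin_pos_of_pos_of_lt_pi hθ.1 (by linarith [hθ.2])
      have hsc : Real.sin θ < Real.cos θ := by
        rw [← Real.sin_pi_div_two_sub]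
        apply Real.sin_lt_sin_of_lt_of_le_pi_div_two (by linarith [hθ.1, hθ.2])
          (by linarith [hθ.1, hθ.2])
        linarith [hθ.2]
      have hs4 : Real.sin θ < Real.sin (π/4) :=
        Real.sin_lt_sin_of_lt_of_le_pi_div_two (by linarith [hθ.1]) (by linarith) hθ.2
      rw [Real.sin_pi_div_four] at hs4
      have hsq : Real.sin θ ^ 2 < 1/2 := by
        nlinarith [Real.sq_sqrt (by norm_num : (2:ℝ) ≥ 0).le, Real.sqrt_nonneg 2]
      have hch : ∀ t : ℝ, Real.exp (x * t) + Real.exp (x * -t) = 2 * Real.cosh (x * t) := by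
        intro t; rw [Real.cosh_eq]; rw [mul_neg]; ring
      have hlt : Real.exp (x * Real.sin θ) + Real.exp (x * -Real.sin θ)
          < Real.exp (x * Real.cos θ) + Real.exp (x * -Real.cos θ) := by
        rw [hch, hch]
        have : Real.cosh (x * Real.sin θ) < Real.cosh (x * Real.cos θ) := by
          rw [Real.cosh_lt_cosh]
          rw [abs_of_pos (by positivity), abs_of_pos (by nlinarith)]
          nlinarith
        linarith
      simp only [hG]
      nlinarith
    · positivity
  have hsplit : A x / 2 - S x = ∫ θ in (0:ℝ)..(2*π), f θ := by
    have h1 : (∫ θ in (0:ℝ)..(2*π), f θ)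
        = (∫ θ in (0:ℝ)..(2*π), (1/2) * Real.exp (x * Real.cos θ))
          - ∫ θ in (0:ℝ)..(2*π), Real.sin θ ^ 2 * Real.exp (x * Real.cos θ) := by
      rw [← integral_sub ((by fun_prop : Continuous fun θ =>
          (1/2 : ℝ) * Real.exp (x * Real.cos θ)).intervalIntegrable _ _)
        ((by fun_prop : Continuous fun θ =>
          Real.sin θ ^ 2 * Real.exp (x * Real.cos θ)).intervalIntegrable _ _)]
      exact integral_congr fun θ _ => by simp only [hf]; ring
    rw [h1, intervalIntegral.integral_const_mul]
    unfold A S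
    ring
  have hval : (∫ θ in (0:ℝ)..(2*π), f θ) = 2 * ∫ θ in (0:ℝ)..(π/4), G θ := by
    have h1 : IntervalIntegrable f volume 0 π := hfc.intervalIntegrable _ _
    have h2 : IntervalIntegrable f volume π (2*π) := hfc.intervalIntegrable _ _
    rw [← integral_add_adjacent_intervals h1 h2, e1, e3, e5]
    ring
  have : 0 < A x / 2 - S x := by rw [hsplit, hval]; linarith
  linarith

lemma contA : Continuous A := by
  apply intervalIntegral.continuous_parametric_intervalIntegral_of_continuous'
    (f := fun x θ => Real.exp (x * Real.cos θ))
  exact Real.continuous_exp.comp (continuous_fst.mul (Real.continuous_cos.comp continuous_snd))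

lemma contS : Continuous S := by
  apply intervalIntegral.continuous_parametric_intervalIntegral_of_continuous'
    (f := fun x θ => Real.sin θ ^ 2 * Real.exp (x * Real.cos θ))
  exact (((Real.continuous_sin.comp continuous_snd).pow 2).mul
    (Real.continuous_exp.comp (continuous_fst.mul (Real.continuous_cos.comp continuous_snd))))

lemma B_lt_A (x : ℝ) : B x < A x := by
  have h : 0 < A x - B x := by
    have h1 : A x - B x = ∫ θ in (0:ℝ)..(2*π), (1 - Real.cos θ) * Real.exp (x * Real.cos θ) := by
      rw [show (fun θ => (1 - Real.cos θ) * Real.exp (x * Real.cos θ))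
          = fun θ => Real.exp (x * Real.cos θ) - Real.cos θ * Real.exp (x * Real.cos θ) by
        funext θ; ring]
      rw [integral_sub ((by fun_prop : Continuous fun θ =>
          Real.exp (x * Real.cos θ)).intervalIntegrable _ _)
        ((by fun_prop : Continuous fun θ =>
          Real.cos θ * Real.exp (x * Real.cos θ)).intervalIntegrable _ _)]
      rfl
    rw [h1]
    apply intervalIntegral_pos_of_pos_on
      ((by fun_prop : Continuous fun θ =>
        (1 - Real.cos θ) * Real.exp (x * Real.cos θ)).intervalIntegrable _ _)
    · intro θ hθ
      have hc : Real.cos θ < 1 := by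
        rcases lt_or_eq_of_le (Real.cos_le_one θ) with h | h
        · exact h
        · exfalso
          have := (Real.cos_eq_one_iff_of_lt_of_lt (by linarith [hθ.1, pi_pos]) hθ.2).mp h
          linarith [hθ.1]
      have := Real.exp_pos (x * Real.cos θ)
      nlinarith
    · positivity
  linarith

lemma S0 : S 0 = π := by
  unfold S
  simp only [zero_mul, Real.exp_zero, mul_one]
  rw [integral_sin_sq]
  simp [Real.sin_two_pi, Real.cos_two_pi]

lemma A0 : A 0 = 2 * π := by
  unfold A
  simp

end VFix

theorem positive_fixed_point_iff (K : ℝ) :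
    ((∃ r : ℝ, 0 < r ∧ r = V (K * r)) ↔ 2 < K) ∧
      ∀ r : ℝ, 0 < r → r = V (K * r) → r ∈ Ioo (0:ℝ) 1 := by
  have hA := VFix.A_pos
  have hS := VFix.S_pos
  have hVx : ∀ x, V x = x * (VFix.S x / VFix.A x) := by
    intro x
    rw [VFix.V_eq, VFix.B_eq, mul_div_assoc]
  have key : ∀ r : ℝ, 0 < r → r = V (K * r) → 0 < K * r ∧ r < 1 := by
    intro r hr hV
    have hKr : 0 < K * r := by
      by_contra h
      push_neg at h
      have hq : 0 ≤ VFix.S (K*r) / VFix.A (K*r) := le_of_lt (div_pos (hS _) (hA _))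
      have := mul_nonpos_of_nonpos_of_nonneg h hq
      rw [← hVx (K*r)] at this
      linarith [hV ▸ hr]
    refine ⟨hKr, ?_⟩
    have hlt := VFix.B_lt_A (K * r)
    have : V (K*r) < 1 := by rw [VFix.V_eq]; exact (div_lt_one (hA _)).mpr hlt
    linarith [hV ▸ this]
  constructor
  · constructor
    · rintro ⟨r, hr, hV⟩
      obtain ⟨hKr, _⟩ := key r hr hV
      have hra : r * VFix.A (K*r) = VFix.B (K*r) := by
        rw [VFix.V_eq, eq_div_iff (hA (K*r)).ne'] at hV
        exact hV
      rw [VFix.B_eq] at hra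
      have hhalf := VFix.half (K*r) hKr
      have h1 : 2 * r < K * r := by
        nlinarith [mul_lt_mul_of_pos_left hhalf hKr, hA (K*r)]
      exact lt_of_mul_lt_mul_right (by linarith) hr.le
    · intro hK
      have hK0 : (0:ℝ) < K := by linarith
      set c : ℝ → ℝ := fun x => VFix.S x / VFix.A x with hc
      have hcc : Continuous c := VFix.contS.div VFix.contA fun x => (hA x).ne'
      have hc0 : c 0 = 1/2 := by
        simp only [hc, VFix.S0, VFix.A0]
        rw [div_eq_iff (by positivity)]
        ring
      have h1K : 1/K < c 0 := by
        rw [hc0, div_lt_div_iff₀ hK0 (by norm_num : (0:ℝ) < 2)]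
        linarith
      have hev := (hcc.continuousAt (x := 0)).eventually (eventually_gt_nhds h1K)
      obtain ⟨δ, hδ, hball⟩ := Metric.eventually_nhds_iff.mp hev
      set r₀ : ℝ := min (δ/(2*K)) (1/2) with hr₀
      have hr₀pos : 0 < r₀ := lt_min (by positivity) (by norm_num)
      have hr₀1 : r₀ < 1 := lt_of_le_of_lt (min_le_right _ _) (by norm_num)
      have hKr₀d : dist (K * r₀) 0 < δ := by
        rw [Real.dist_eq, sub_zero, abs_of_pos (by positivity)]
        have h1 : K * r₀ ≤ K * (δ/(2*K)) := mul_le_mul_of_nonneg_left (min_le_left _ _) hK0.le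
        have h2 : K * (δ/(2*K)) = δ/2 := by field_simp
        linarith
      have hcr : 1/K < c (K * r₀) := hball hKr₀d
      have hg0 : 0 < V (K * r₀) - r₀ := by
        rw [hVx]
        have hceq : VFix.S (K*r₀) / VFix.A (K*r₀) = c (K*r₀) := rfl
        rw [hceq]
        have h1 : 1 < K * c (K * r₀) := by
          calc 1 = K * (1/K) := by field_simp
          _ < K * c (K*r₀) := mul_lt_mul_of_pos_left hcr hK0
        nlinarith [hr₀pos]
      have hg1 : V (K * 1) - 1 < 0 := by
        have hlt := VFix.B_lt_A (K*1)
        have : V (K*1) < 1 := by rw [VFix.V_eq]; exact (div_lt_one (hA _)).mpr hlt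
        linarith
      have hVc : Continuous V := by
        have hVf : V = fun x => x * c x := funext hVx
        rw [hVf]
        exact continuous_id.mul hcc
      have hgc : ContinuousOn (fun r => V (K*r) - r) (Icc r₀ 1) := by
        apply Continuous.continuousOn
        exact (hVc.comp (continuous_const.mul continuous_id)).sub continuous_id
      obtain ⟨r, hrmem, hgr⟩ := intermediate_value_Icc' hr₀1.le hgc ⟨hg1.le, hg0.le⟩
      refine ⟨r, lt_of_lt_of_le hr₀pos hrmem.1, ?_⟩
      have : V (K*r) - r = 0 := hgr
      linarith
  · intro r hr hV
    exact ⟨hr, (key r hr hV).2⟩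
end
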